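/- arXiv:2012.04316 — 8 statements merged into one kernel-verified Lean document; each statement's English description precedes it below -/
import Mathlib

section
/- Let n be a positive integer, q = 2^n, and d = q^3 + q^2 + q - 1. Then gcd(d, q^4 - 1) = 1. -/
theorem stmt_0 (n : ℕ) (hn : 0 < n) (q d : ℕ) (hq : q = 2 ^ n)
    (hd : d = q ^ 3 + q ^ 2 + q - 1) :
    Nat.gcd d (q ^ 4 - 1) = 1 := by
  have hq2 : 2 ≤ q := by
    subst hq
    calc 2 = 2 ^ 1 := rfl
    _ ≤ 2 ^ n := Nat.pow_le_pow_right (by norm_num) hn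
  set g := Nat.gcd d (q ^ 4 - 1) with hg
  have hg1 : g ∣ d := Nat.gcd_dvd_left _ _
  have hg2 : g ∣ q ^ 4 - 1 := Nat.gcd_dvd_right _ _
  have hd1 : (g : ℤ) ∣ (d : ℤ) := Int.natCast_dvd_natCast.mpr hg1
  have hd2 : (g : ℤ) ∣ ((q : ℤ) ^ 4 - 1) := by
    have := Int.natCast_dvd_natCast.mpr hg2
    have hcast : ((q ^ 4 - 1 : ℕ) : ℤ) = (q : ℤ) ^ 4 - 1 := by
      have : 1 ≤ q ^ 4 := Nat.one_le_pow _ _ (by omega)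
      push_cast [this]; ring
    rwa [hcast] at this
  have hdc : (d : ℤ) = (q : ℤ) ^ 3 + (q : ℤ) ^ 2 + (q : ℤ) - 1 := by
    subst hd
    have h1 : 1 ≤ q ^ 3 + q ^ 2 + q := by nlinarith
    push_cast [h1]; ring
  have h4 : (g : ℤ) ∣ 4 := by
    have h := dvd_sub (Dvd.dvd.mul_left hd1 (2 - ((q:ℤ)^2 + 2*q + 3) * (1 - q)))
      (Dvd.dvd.mul_left hd2 ((q:ℤ)^2 + 2*q + 3))
    have heq : (2 - ((q:ℤ)^2 + 2*q + 3) * (1 - q)) * (d : ℤ)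
        - ((q:ℤ)^2 + 2*q + 3) * ((q:ℤ)^4 - 1) = 4 := by
      rw [hdc]; ring
    rwa [heq] at h
  have h4n : g ∣ 4 := by
    have := Int.natCast_dvd_natCast.mp (by exact_mod_cast h4)
    exact this
  have hodd : Odd d := by
    have : Even q := by subst hq; exact (Nat.even_pow.mpr ⟨even_two, by omega⟩)
    obtain ⟨k, hk⟩ := this
    subst hd
    refine ⟨(2*k)^3/2 + (2*k)^2/2 + k - 1, by subst hk; ring_nf; omega⟩
  have hgodd : Odd g := hodd.of_dvd_nat hg1
  have hcop : Nat.Coprime g 4 := by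
    have : Nat.Coprime g 2 := Nat.coprime_two_right.mpr hgodd
    simpa using this.pow_right 2
  exact Nat.Coprime.eq_one_of_dvd hcop h4n
end

section
/- Let n be a positive integer, q = 2^n, and d = q^3 + q^2 + q - 1. The set of solutions x ∈ F_{q^4} of (x+1)^d + x^d = 1 is exactly the subfield F_{q^2}; in particular this equation has exactly q^2 solutions. -/
open Polynomial Finset

lemma count_fixed (F : Type*) [Field F] [Fintype F] [DecidableEq F] (m : ℕ) (hm : 1 < m)
    (hcard : Fintype.card F = m ^ 2) (h2 : (2 : F) = 0)
    (hhom : ∀ a b : F, (a + b) ^ m = a ^ m + b ^ m) :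
    (Finset.univ.filter fun x : F => x ^ m = x).card = m := by
  classical
  let ψ : F →+ F :=
  { toFun := fun x => x ^ m - x
    map_zero' := by simp [zero_pow (by omega : m ≠ 0)]
    map_add' := fun a b => by show (a + b) ^ m - (a + b) = (a ^ m - a) + (b ^ m - b); rw [hhom]; ring }
  have hψ : ∀ x : F, ψ x = x ^ m - x := fun _ => rfl
  have hmm : ∀ x : F, (x ^ m) ^ m = x := by
    intro x
    rw [← pow_mul, ← sq, ← hcard, FiniteField.pow_card]
  have hneg : ∀ x : F, (-x) ^ m = x ^ m := by
    intro x
    have : (-x : F) = x := by linear_combination -x * h2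
    rw [this]
  have hψψ : ∀ x : F, ψ (ψ x) = 0 := by
    intro x
    rw [hψ, hψ]
    have h3 : (x ^ m - x) ^ m = (x ^ m) ^ m + x ^ m := by
      rw [sub_eq_add_neg, hhom, hneg]
    rw [h3, hmm]
    linear_combination x * h2
  have hker : ∀ x : F, x ∈ ψ.ker ↔ x ^ m = x := by
    intro x; rw [AddMonoidHom.mem_ker, hψ, sub_eq_zero]
  have hupper : (Finset.univ.filter fun x : F => x ^ m = x).card ≤ m := by
    have hP : (X ^ m - X : F[X]) ≠ 0 := FiniteField.X_pow_card_sub_X_ne_zero F hm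
    calc (Finset.univ.filter fun x : F => x ^ m = x).card
        ≤ (X ^ m - X : F[X]).roots.toFinset.card := by
          apply Finset.card_le_card
          intro x hx
          simp only [Finset.mem_filter] at hx
          rw [Multiset.mem_toFinset, mem_roots hP]
          simp [IsRoot, sub_eq_zero, hx.2]
      _ ≤ Multiset.card (X ^ m - X : F[X]).roots := (X ^ m - X : F[X]).roots.toFinset_card_le
      _ ≤ (X ^ m - X : F[X]).natDegree := Polynomial.card_roots' _
      _ = m := FiniteField.X_pow_card_sub_X_natDegree_eq F hm
  have hcards : Nat.card F = Nat.card (F ⧸ ψ.ker) * Nat.card ψ.ker :=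
    AddSubgroup.card_eq_card_quotient_mul_card_addSubgroup ψ.ker
  have hquot : Nat.card (F ⧸ ψ.ker) = Nat.card ψ.range :=
    Nat.card_congr (QuotientAddGroup.quotientKerEquivRange ψ).toEquiv
  have hrange_le : Nat.card ψ.range ≤ Nat.card ψ.ker := by
    have hsub : (ψ.range : Set F) ⊆ (ψ.ker : Set F) := by
      rintro y ⟨x, rfl⟩
      have := hψψ x
      simpa [AddMonoidHom.mem_ker] using this
    exact Nat.card_mono (Set.toFinite _) hsub
  have hkercard : Nat.card ψ.ker = (Finset.univ.filter fun x : F => x ^ m = x).card := by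
    rw [Nat.card_congr (Equiv.subtypeEquivRight hker), Nat.card_eq_fintype_card,
      Fintype.card_subtype]
  set k := (Finset.univ.filter fun x : F => x ^ m = x).card with hk
  rw [hquot, hkercard] at hcards
  rw [Nat.card_eq_fintype_card, hcard] at hcards
  rw [hkercard] at hrange_le
  set r := Nat.card ψ.range
  nlinarith [hcards, hrange_le, hupper]

theorem stmt_7 (n : ℕ) (hn : 0 < n) (q d : ℕ) (hq : q = 2 ^ n)
    (hd : d = q ^ 3 + q ^ 2 + q - 1)
    (F : Type*) [Field F] [Fintype F] [DecidableEq F] (hF : Fintype.card F = q ^ 4) :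
    (∀ x : F, (x + 1) ^ d + x ^ d = 1 ↔ x ^ (q ^ 2) = x) ∧
    (Finset.univ.filter fun x : F => (x + 1) ^ d + x ^ d = 1).card = q ^ 2 := by
  have hq1 : 1 < q := by rw [hq]; exact Nat.one_lt_two_pow_iff.mpr (by omega)
  have hq0' : q ≠ 0 := by omega
  have hcube : 1 ≤ q ^ 3 + q ^ 2 + q := le_trans hq1.le (Nat.le_add_left q _)
  have hd1 : d + 1 = q ^ 3 + q ^ 2 + q := by rw [hd, Nat.sub_add_cancel hcube]
  have hcube1 : 1 < q ^ 3 + q ^ 2 + q := lt_of_lt_of_le hq1 (Nat.le_add_left q _)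
  have hd0 : d ≠ 0 := by
    intro h0; rw [h0, zero_add] at hd1; exact hcube1.ne' hd1.symm
  haveI := ringChar.charP F
  haveI hchar : CharP F 2 := by
    obtain ⟨m, hpp, hc⟩ := FiniteField.card F (ringChar F)
    have h1 : ringChar F ∣ Fintype.card F := hc ▸ dvd_pow_self _ m.2.ne'
    rw [hF, hq, ← pow_mul] at h1
    have h3 : ringChar F = 2 :=
      (Nat.prime_dvd_prime_iff_eq hpp Nat.prime_two).mp (hpp.dvd_of_dvd_pow h1)
    exact ringChar.of_eq h3
  have h2 : (2 : F) = 0 := by exact_mod_cast (CharP.cast_eq_zero F 2)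
  have hadd : ∀ a b : F, (a + b) ^ q = a ^ q + b ^ q := by
    intro a b; rw [hq]; exact add_pow_char_pow a b 2 n
  have part1 : ∀ x : F, (x + 1) ^ d + x ^ d = 1 ↔ x ^ (q ^ 2) = x := by
    intro x
    constructor
    · intro h
      by_cases hx0 : x = 0
      · subst hx0; exact zero_pow (pow_ne_zero 2 hq0')
      by_cases hx1 : x = 1
      · subst hx1; exact one_pow _
      have hx1' : x + 1 ≠ 0 := by
        intro hc; exact hx1 (by linear_combination hc - h2)
      set y1 := x ^ q with hy1
      set y2 := y1 ^ q with hy2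
      set y3 := y2 ^ q with hy3
      have hxq2 : x ^ q ^ 2 = y2 := by
        rw [hy2, hy1, ← pow_mul, pow_two]
      have hy3q : y3 ^ q = x := by
        rw [hy3, hy2, hy1, ← pow_mul, ← pow_mul, ← pow_mul,
          show q * (q * (q * q)) = q ^ 4 by ring, ← hF]
        exact FiniteField.pow_card x
      have hdq : x ^ (d + 1) = y1 * (y2 * y3) := by
        rw [hd1, pow_add, pow_add, show q ^ 3 = q * q * q by ring,
          show q ^ 2 = q * q by ring, pow_mul, pow_mul, ← hy1, ← hy2, ← hy3]
        ring
      have ha1 : (x + 1) ^ q = y1 + 1 := by rw [hadd, one_pow, ← hy1]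
      have ha2 : (y1 + 1) ^ q = y2 + 1 := by rw [hadd, one_pow, ← hy2]
      have ha3 : (y2 + 1) ^ q = y3 + 1 := by rw [hadd, one_pow, ← hy3]
      have hdq' : (x + 1) ^ (d + 1) = (y1 + 1) * ((y2 + 1) * (y3 + 1)) := by
        rw [hd1, pow_add, pow_add, show q ^ 3 = q * q * q by ring,
          show q ^ 2 = q * q by ring, pow_mul, pow_mul, ha1, ha2, ha3]
        ring
      have hE2 : ((y1 + 1) * ((y2 + 1) * (y3 + 1))) * x + (y1 * (y2 * y3)) * (x + 1)
          = x * (x + 1) := by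
        rw [← hdq, ← hdq', pow_succ, pow_succ]
        linear_combination (x * (x + 1)) * h
      have hKey : (x * (x + 1)) *
          ((x + y1 + y2 + y3) * x + (x * (y1 * y2) + x * (y1 * y3) + x * (y2 * y3) + y1 * (y2 * y3)))
          = 0 := by
        linear_combination (x * (x + 1)) * hE2 +
          (x ^ 3 + x ^ 4 - x ^ 2 * (y1 * (y2 * y3)) - x ^ 3 * (y1 * (y2 * y3))) * h2
      have hlin : (x + y1 + y2 + y3) * x +
          (x * (y1 * y2) + x * (y1 * y3) + x * (y2 * y3) + y1 * (y2 * y3)) = 0 := by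
        rcases mul_eq_zero.mp hKey with h' | h'
        · exact absurd h' (mul_ne_zero hx0 hx1')
        · exact h'
      have he1q : (x + y1 + y2 + y3) ^ q = x + y1 + y2 + y3 := by
        simp only [hadd]
        rw [← hy1, ← hy2, ← hy3, hy3q]
        ring
      have he2q : (x * y1 + x * y2 + x * y3 + y1 * y2 + y1 * y3 + y2 * y3) ^ q
          = x * y1 + x * y2 + x * y3 + y1 * y2 + y1 * y3 + y2 * y3 := by
        simp only [hadd, mul_pow]
        rw [← hy1, ← hy2, ← hy3, hy3q]
        ring
      by_cases he1 : x + y1 + y2 + y3 = 0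
      · -- e1 = 0 case
        have he3 : x * (y1 * y2) + x * (y1 * y3) + x * (y2 * y3) + y1 * (y2 * y3) = 0 := by
          linear_combination hlin - x * he1
        have hC : x ^ 4 + (x * y1 + x * y2 + x * y3 + y1 * y2 + y1 * y3 + y2 * y3) * x ^ 2
            + x * (y1 * (y2 * y3)) = 0 := by
          linear_combination x ^ 3 * he1 + x * he3
        have he4q : (x * (y1 * (y2 * y3))) ^ q = x * (y1 * (y2 * y3)) := by
          simp only [mul_pow]
          rw [← hy1, ← hy2, ← hy3, hy3q]
          ring
        have hCq : (x ^ 4 + (x * y1 + x * y2 + x * y3 + y1 * y2 + y1 * y3 + y2 * y3) * x ^ 2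
            + x * (y1 * (y2 * y3))) ^ q = (0 : F) ^ q := by rw [hC]
        rw [hadd, hadd, he4q, mul_pow, he2q, zero_pow hq0', pow_right_comm x 4 q,
          pow_right_comm x 2 q, ← hy1] at hCq
        -- hCq : y1^4 + e2 * y1^2 + e4 = 0
        have hfac : (y1 ^ 2 + x ^ 2) * (y1 ^ 2 + x ^ 2 +
            (x * y1 + x * y2 + x * y3 + y1 * y2 + y1 * y3 + y2 * y3)) = 0 := by
          linear_combination hCq + hC + (x ^ 2 * y1 ^ 2 - x * (y1 * (y2 * y3))) * h2
        have hy2sq : y2 ^ 2 = x ^ 2 := by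
          rcases mul_eq_zero.mp hfac with h6 | h6
          · have hA : y1 ^ 2 = x ^ 2 := by linear_combination h6 - x ^ 2 * h2
            have hAq : (y1 ^ 2) ^ q = (x ^ 2) ^ q := by rw [hA]
            rw [pow_right_comm y1 2 q, pow_right_comm x 2 q, ← hy1, ← hy2] at hAq
            exact hAq.trans hA
          · have hA : y1 ^ 2 = x ^ 2 + (x * y1 + x * y2 + x * y3 + y1 * y2 + y1 * y3 + y2 * y3) := by
              linear_combination h6 - (x ^ 2 + (x * y1 + x * y2 + x * y3 + y1 * y2 + y1 * y3 + y2 * y3)) * h2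
            have hAq : (y1 ^ 2) ^ q
                = (x ^ 2 + (x * y1 + x * y2 + x * y3 + y1 * y2 + y1 * y3 + y2 * y3)) ^ q := by
              rw [hA]
            rw [pow_right_comm y1 2 q, hadd, pow_right_comm x 2 q, he2q, ← hy1, ← hy2] at hAq
            rw [hAq, hA]
            linear_combination (x * y1 + x * y2 + x * y3 + y1 * y2 + y1 * y3 + y2 * y3) * h2
        have hsq : (y2 + x) ^ 2 = 0 := by
          linear_combination hy2sq + (x ^ 2 + x * y2) * h2
        have h9 : y2 + x = 0 := pow_eq_zero_iff (two_ne_zero) |>.mp hsq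
        rw [hxq2]
        linear_combination h9 - x * h2
      · -- e1 ≠ 0 case
        have he3 : x * (y1 * y2) + x * (y1 * y3) + x * (y2 * y3) + y1 * (y2 * y3)
            = (x + y1 + y2 + y3) * x := by
          linear_combination hlin - ((x + y1 + y2 + y3) * x) * h2
        have h7 : (x * (y1 * y2) + x * (y1 * y3) + x * (y2 * y3) + y1 * (y2 * y3)) ^ q
            = ((x + y1 + y2 + y3) * x) ^ q := by rw [he3]
        simp only [hadd, mul_pow] at h7
        rw [← hy1, ← hy2, ← hy3, hy3q] at h7
        have h8 : (x + y1 + y2 + y3) * y1 = (x + y1 + y2 + y3) * x := by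
          linear_combination he3 - h7
        have hy1x : y1 = x := mul_left_cancel₀ he1 h8
        rw [hxq2, hy2, hy1x, ← hy1, hy1x]
    · intro hx2
      by_cases hx0 : x = 0
      · subst hx0
        norm_num [zero_pow hd0]
      by_cases hx1 : x = 1
      · subst hx1
        have h11 : (1 : F) + 1 = 0 := by linear_combination h2
        rw [h11, zero_pow hd0, one_pow, zero_add]
      have hx1' : x + 1 ≠ 0 := by
        intro hc; exact hx1 (by linear_combination hc - h2)
      have hxq3 : x ^ q ^ 3 = x ^ q := by
        rw [show q ^ 3 = q ^ 2 * q by ring, pow_mul, hx2]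
      have hd1x : x ^ (d + 1) = x * (x ^ q * x ^ q) := by
        rw [hd1, pow_add, pow_add, hxq3, hx2]
        ring
      have hxd : x ^ d = x ^ q * x ^ q := mul_left_cancel₀ hx0 (by rw [← pow_succ']; exact hd1x)
      have hx12 : (x + 1) ^ q ^ 2 = x + 1 := by
        have hh : (x + 1) ^ q ^ 2 = x ^ q ^ 2 + 1 := by
          rw [pow_two, pow_mul, hadd, one_pow, hadd, one_pow, ← pow_mul, ← pow_two]
        rw [hh, hx2]
      have hx1q3 : (x + 1) ^ q ^ 3 = (x + 1) ^ q := by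
        rw [show q ^ 3 = q ^ 2 * q by ring, pow_mul, hx12]
      have hd1x' : (x + 1) ^ (d + 1) = (x + 1) * ((x + 1) ^ q * (x + 1) ^ q) := by
        rw [hd1, pow_add, pow_add, hx1q3, hx12]
        ring
      have hx1d : (x + 1) ^ d = (x + 1) ^ q * (x + 1) ^ q :=
        mul_left_cancel₀ hx1' (by rw [← pow_succ']; exact hd1x')
      rw [hxd, hx1d, hadd, one_pow]
      linear_combination (x ^ q * x ^ q + x ^ q) * h2
  refine ⟨part1, ?_⟩
  have hfilter : (Finset.univ.filter fun x : F => (x + 1) ^ d + x ^ d = 1)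
      = (Finset.univ.filter fun x : F => x ^ q ^ 2 = x) := by
    apply Finset.filter_congr
    intro x _
    exact part1 x
  rw [hfilter]
  exact count_fixed F (q ^ 2) (Nat.one_lt_pow two_ne_zero hq1) (by rw [hF]; ring) h2
    (fun a b => by
      rw [pow_two, pow_mul, pow_mul, pow_mul, hadd, hadd])
end

section
/- Let n be a positive integer, q = 2^n, and let y, z ∈ F_{q^4} with y^{q-1} = 1 and z^{q^2+1} = 1. If (yz^{-q}+1)(yz^{-1}+1)(yz^{q}+1) + y^2 z^{-2}(yz+1) = yz + 1, then z = 1. -/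
theorem stmt_9 (n : ℕ) (hn : 0 < n) (q : ℕ) (hq : q = 2 ^ n)
    (F : Type*) [Field F] [Fintype F] (hF : Fintype.card F = q ^ 4)
    (y z : F) (hy : y ^ (q - 1) = 1) (hz : z ^ (q ^ 2 + 1) = 1)
    (h : (y * (z ^ q)⁻¹ + 1) * (y * z⁻¹ + 1) * (y * z ^ q + 1)
          + y ^ 2 * (z ^ 2)⁻¹ * (y * z + 1) = y * z + 1) :
    z = 1 := by
  have hq2 : 2 ≤ q := by subst hq; exact Nat.one_lt_two_pow_iff.mpr hn.ne'
  have hqe : Even q := by subst hq; exact Nat.even_pow.mpr ⟨even_two, hn.ne'⟩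
  have h2 : (2 : F) = 0 := by
    have hc := FiniteField.cast_card_eq_zero F
    rw [hF, hq] at hc
    push_cast at hc
    rw [← pow_mul] at hc
    exact pow_eq_zero_iff (by positivity) |>.mp hc
  have hy0 : y ≠ 0 := by
    intro h0; rw [h0, zero_pow (by omega)] at hy; exact zero_ne_one hy
  have hz0 : z ≠ 0 := by
    intro h0; rw [h0, zero_pow (by positivity)] at hz; exact zero_ne_one hz
  have ha0 : z ^ q ≠ 0 := pow_ne_zero _ hz0
  have key0 : y * ((y + z) * (z ^ q * z + 1) * (z + z ^ q)) * z = 0 := by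
    have h' := sub_eq_zero.mpr h
    field_simp at h'
    linear_combination z * h' + (y * z ^ 4 * z ^ q - y ^ 3 * z ^ 2 * z ^ q) * h2
  have key : (y + z) * (z ^ q * z + 1) * (z + z ^ q) = 0 := by
    rcases mul_eq_zero.mp key0 with h' | h'
    · rcases mul_eq_zero.mp h' with h' | h'
      · exact absurd h' hy0
      · exact h'
    · exact absurd h' hz0
  have hodvd : orderOf z ∣ q ^ 2 + 1 := orderOf_dvd_of_pow_eq_one hz
  have hqodd1 : Odd (q - 1) := Nat.Even.sub_odd (by omega) hqe odd_one
  have hqodd2 : Odd (q + 1) := hqe.add_one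
  have final : ∀ m : ℕ, (m = q - 1 ∨ m = q + 1) → z ^ m = 1 → z = 1 := by
    intro m hm hzm
    have hd1 : orderOf z ∣ m := orderOf_dvd_of_pow_eq_one hzm
    have d1 : ((orderOf z : ℤ)) ∣ (q : ℤ) ^ 2 + 1 := by
      have := Int.natCast_dvd_natCast.mpr hodvd
      push_cast at this; exact this
    have dm : (orderOf z : ℤ) ∣ ((q : ℤ) - 1) * ((q : ℤ) + 1) := by
      rcases hm with rfl | rfl
      · refine Dvd.dvd.mul_right ?_ _
        have := Int.natCast_dvd_natCast.mpr hd1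
        rwa [Nat.cast_sub (by omega), Nat.cast_one] at this
      · refine Dvd.dvd.mul_left ?_ _
        have := Int.natCast_dvd_natCast.mpr hd1
        push_cast at this; exact this
    have hd2 : orderOf z ∣ 2 := by
      have hdz : (orderOf z : ℤ) ∣ 2 := by
        have := dvd_sub d1 dm
        have e : ((q : ℤ) ^ 2 + 1 - ((q : ℤ) - 1) * ((q : ℤ) + 1)) = 2 := by ring
        rw [e] at this; exact this
      exact_mod_cast hdz
    have hodd : Odd (orderOf z) := by
      rcases hm with rfl | rfl
      · exact hqodd1.of_dvd_nat hd1
      · exact hqodd2.of_dvd_nat hd1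
    have h1 : orderOf z = 1 := by
      rcases (Nat.dvd_prime Nat.prime_two).mp hd2 with h1 | h1
      · exact h1
      · rw [h1] at hodd; exact absurd hodd (by decide)
    exact orderOf_eq_one_iff.mp h1
  rcases mul_eq_zero.mp key with h' | h'
  · rcases mul_eq_zero.mp h' with h' | h'
    · have hyz : y = z := by linear_combination h' - z * h2
      apply final (q - 1) (Or.inl rfl)
      rw [← hyz]; exact hy
    · apply final (q + 1) (Or.inr rfl)
      have hpq : z ^ (q + 1) = z ^ q * z := by ring
      rw [hpq]; linear_combination h' - h2
  · apply final (q - 1) (Or.inl rfl)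
    have hzq : z ^ q = z := by linear_combination h' - z * h2
    have hmul : z ^ (q - 1) * z = 1 * z := by
      rw [one_mul, ← pow_succ]
      rw [show q - 1 + 1 = q from by omega]
      exact hzq
    exact mul_right_cancel₀ hz0 hmul
end

section
/- Let n be a positive integer, q = 2^n, and w ∈ F_{q^2} \ F_q with σ ∈ F_q satisfying σ^2 w^{q+1} ≠ 1. Then the number of ε ∈ F_q^* such that Tr_{F_{q^2}/F_2}(εw/(1+σw)^2) = 1 is exactly q/2. -/
open Polynomial Finset

lemma aux_card_roots {F : Type*} [Field F] [Fintype F] [DecidableEq F]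
    (P : Polynomial F) (hP : P ≠ 0) :
    (Finset.univ.filter fun a : F => Polynomial.eval a P = 0).card ≤ P.natDegree := by
  calc (Finset.univ.filter fun a : F => Polynomial.eval a P = 0).card
      ≤ P.roots.toFinset.card := Finset.card_le_card (by
        intro a ha
        simp only [Finset.mem_filter] at ha
        simp [Multiset.mem_toFinset, Polynomial.mem_roots, hP, Polynomial.IsRoot, ha.2])
    _ ≤ Multiset.card P.roots := P.roots.toFinset_card_le
    _ ≤ P.natDegree := P.card_roots'

-- number of elements with a^q = a equals q, when card F = q^2
lemma aux_cardK {F : Type*} [Field F] [Fintype F] [DecidableEq F] {q : ℕ} (hq2 : 2 ≤ q)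
    (hF : Fintype.card F = q ^ 2) :
    (Finset.univ.filter fun a : F => a ^ q = a).card = q := by
  have hq1 : 1 ≤ q := by omega
  set P1 : Polynomial F := X ^ q - X with hP1
  have hdegP1 : P1.natDegree = q := by
    rw [hP1]
    have : (X : Polynomial F).natDegree < (X ^ q : Polynomial F).natDegree := by
      simp [Polynomial.natDegree_X_pow]; omega
    rw [Polynomial.natDegree_sub_eq_left_of_natDegree_lt this, Polynomial.natDegree_X_pow]
  have hP1ne : P1 ≠ 0 := by
    intro h
    have := hdegP1
    rw [h] at this
    simp at this
    omega
  set P2 : Polynomial F := X ^ (q ^ 2) - X with hP2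
  have hdegP2 : P2.natDegree = q ^ 2 := by
    rw [hP2]
    have : (X : Polynomial F).natDegree < (X ^ (q ^ 2) : Polynomial F).natDegree := by
      simp [Polynomial.natDegree_X_pow]; nlinarith
    rw [Polynomial.natDegree_sub_eq_left_of_natDegree_lt this, Polynomial.natDegree_X_pow]
  have hP2ne : P2 ≠ 0 := by
    intro h
    have := hdegP2
    rw [h] at this
    simp at this
    nlinarith
  have hdvd : P1 ∣ P2 := by
    have h1 : ((X : Polynomial F) ^ (q - 1) - 1) ∣ (X ^ (q ^ 2 - 1) - 1) := by
      have := sub_dvd_pow_sub_pow ((X : Polynomial F) ^ (q - 1)) 1 (q + 1)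
      have hee : (q - 1) * (q + 1) = q ^ 2 - 1 := by
        obtain ⟨k, rfl⟩ : ∃ k, q = k + 1 := ⟨q - 1, by omega⟩
        have : (k + 1) ^ 2 = k * (k + 1 + 1) + 1 := by ring
        simp only [Nat.add_sub_cancel]
        omega
      rwa [one_pow, ← pow_mul, hee] at this
    have e1 : P1 = X * (X ^ (q - 1) - 1) := by
      rw [hP1, mul_sub, mul_one, ← pow_succ']
      congr 1
      congr 1
      omega
    have e2 : P2 = X * (X ^ (q ^ 2 - 1) - 1) := by
      rw [hP2, mul_sub, mul_one, ← pow_succ']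
      congr 1
      congr 1
      have : 1 ≤ q ^ 2 := by nlinarith
      omega
    rw [e1, e2]
    exact mul_dvd_mul_left X h1
  obtain ⟨R, hR⟩ := hdvd
  have hRne : R ≠ 0 := by
    intro h; rw [h, mul_zero] at hR; exact hP2ne hR
  have hdegR : R.natDegree = q ^ 2 - q := by
    have := Polynomial.natDegree_mul hP1ne hRne
    rw [← hR, hdegP2, hdegP1] at this
    omega
  have hsplit : (Finset.univ : Finset F) ⊆
      (Finset.univ.filter fun a : F => Polynomial.eval a P1 = 0) ∪
      (Finset.univ.filter fun a : F => Polynomial.eval a R = 0) := by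
    intro a _
    have hroot : Polynomial.eval a P2 = 0 := by
      rw [hP2]
      simp only [Polynomial.eval_sub, Polynomial.eval_pow, Polynomial.eval_X]
      rw [← hF, FiniteField.pow_card, sub_self]
    rw [hR, Polynomial.eval_mul, mul_eq_zero] at hroot
    rcases hroot with h | h
    · exact Finset.mem_union_left _ (Finset.mem_filter.mpr ⟨Finset.mem_univ a, h⟩)
    · exact Finset.mem_union_right _ (Finset.mem_filter.mpr ⟨Finset.mem_univ a, h⟩)
  have hcardsplit := Finset.card_le_card hsplit
  have h1 := aux_card_roots P1 hP1ne
  have h2 := aux_card_roots R hRne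
  have hcu : (Finset.univ : Finset F).card = q ^ 2 := by rw [← hF]; rfl
  have hges : q ≤ (Finset.univ.filter fun a : F => Polynomial.eval a P1 = 0).card := by
    have := Finset.card_union_le
      (Finset.univ.filter fun a : F => Polynomial.eval a P1 = 0)
      (Finset.univ.filter fun a : F => Polynomial.eval a R = 0)
    rw [hdegR] at h2
    have hq2' : q ≤ q ^ 2 := by nlinarith
    omega
  have heq : (Finset.univ.filter fun a : F => a ^ q = a) =
      (Finset.univ.filter fun a : F => Polynomial.eval a P1 = 0) := by
    apply Finset.filter_congr
    intro a _
    rw [hP1]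
    simp [sub_eq_zero]
  rw [heq]
  rw [hdegP1] at h1
  omega

theorem stmt_11 (n : ℕ) (hn : 0 < n) (q : ℕ) (hq : q = 2 ^ n)
    (F : Type*) [Field F] [Fintype F] [DecidableEq F] (hF : Fintype.card F = q ^ 2)
    (w σ : F) (hw : w ^ q ≠ w) (hσ : σ ^ q = σ) (hσw : σ ^ 2 * w ^ (q + 1) ≠ 1) :
    (Finset.univ.filter fun ε : F => ε ^ q = ε ∧ ε ≠ 0 ∧
      ∑ i ∈ Finset.range (2 * n), (ε * w / (1 + σ * w) ^ 2) ^ 2 ^ i = 1).card = q / 2 := by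
  classical
  have hq2 : 2 ≤ q := by
    rw [hq]
    calc 2 = 2 ^ 1 := rfl
    _ ≤ 2 ^ n := Nat.pow_le_pow_right (by norm_num) hn
  -- characteristic 2
  obtain ⟨p, hcp⟩ := CharP.exists F
  haveI := hcp
  obtain ⟨m, hp, hcardF⟩ := FiniteField.card F p
  have hp2 : p = 2 := by
    have h1 : p ∣ Fintype.card F := by
      rw [hcardF]
      exact dvd_pow_self p (by exact_mod_cast m.pos.ne')
    rw [hF, hq, ← pow_mul] at h1
    exact (Nat.prime_dvd_prime_iff_eq hp Nat.prime_two).mp (hp.dvd_of_dvd_pow h1)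
  subst hp2
  -- basic char-2 facts
  have haddself : ∀ a : F, a + a = 0 := fun a => CharTwo.add_self_eq_zero a
  have haddcancel : ∀ a b : F, a + b = 0 → a = b := by
    intro a b hab
    have h1 : a = -b := eq_neg_of_add_eq_zero_left hab
    rwa [CharTwo.neg_eq] at h1
  have hfq : ∀ a b : F, (a + b) ^ q = a ^ q + b ^ q := by
    intro a b; rw [hq]; exact add_pow_char_pow a b 2 n
  have hpcard : ∀ a : F, a ^ q ^ 2 = a := by
    intro a; rw [← hF]; exact FiniteField.pow_card a
  have hqq : ∀ a : F, (a ^ q) ^ q = a := by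
    intro a
    rw [← pow_mul, ← sq]
    exact hpcard a
  -- denominators
  have hσw1 : σ * w ≠ 1 := by
    intro h
    have h2 : (σ * w) ^ q = 1 := by rw [h, one_pow]
    rw [mul_pow, hσ] at h2
    have hσ0 : σ ≠ 0 := by rintro rfl; rw [zero_mul] at h; exact one_ne_zero h.symm
    exact hw (mul_left_cancel₀ hσ0 (h2.trans h.symm))
  set d : F := 1 + σ * w with hd
  have hdne : d ≠ 0 := fun h => hσw1 ((haddcancel 1 (σ * w) h).symm)
  have hσwq1 : σ * w ^ q ≠ 1 := by
    intro h
    have h2 : (σ * w ^ q) ^ q = 1 := by rw [h, one_pow]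
    rw [mul_pow, hσ, hqq] at h2
    exact hσw1 h2
  set d' : F := 1 + σ * w ^ q with hd'
  have hd'ne : d' ≠ 0 := fun h => hσwq1 ((haddcancel 1 (σ * w ^ q) h).symm)
  have hdq : d ^ q = d' := by rw [hd, hd', hfq, one_pow, mul_pow, hσ]
  set x : F := w / d ^ 2 with hx
  have hxq : x ^ q = w ^ q / d' ^ 2 := by
    rw [hx, div_pow, ← pow_mul, mul_comm 2 q, pow_mul, hdq]
  rw [pow_succ w q] at hσw
  have hxne : x + x ^ q ≠ 0 := by
    intro h
    have hxx : x = x ^ q := haddcancel _ _ h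
    rw [hx, hxq, div_eq_div_iff (pow_ne_zero 2 hdne) (pow_ne_zero 2 hd'ne)] at hxx
    rw [hd, hd'] at hxx
    rw [CharTwo.add_sq, CharTwo.add_sq, one_pow, mul_pow, mul_pow] at hxx
    have h2 : (2 : F) = 0 := by exact_mod_cast (CharP.cast_eq_zero F 2)
    have hfac : (w + w ^ q) * (1 + σ ^ 2 * (w ^ q * w)) = 0 := by
      linear_combination hxx + (w ^ q + σ ^ 2 * (w ^ q * w ^ 2)) * h2
    rcases mul_eq_zero.mp hfac with h0 | h0
    · exact hw (haddcancel _ _ h0).symm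
    · exact hσw (haddcancel _ _ h0).symm
  set u : F := x + x ^ q with hu
  have hune : u ≠ 0 := hxne
  have huq : u ^ q = u := by rw [hu, hfq, hqq, add_comm]
  -- trace function
  set T : F → F := fun y => ∑ i ∈ Finset.range (2 * n), y ^ 2 ^ i with hT
  have hTadd : ∀ a b : F, T (a + b) = T a + T b := by
    intro a b
    simp only [hT]
    rw [← Finset.sum_add_distrib]
    exact Finset.sum_congr rfl fun i _ => add_pow_char_pow a b 2 i
  have hT01 : ∀ y : F, T y = 0 ∨ T y = 1 := by
    intro y
    have hsq : T y ^ 2 = T y := by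
      simp only [hT]
      rw [sum_pow_char]
      calc ∑ i ∈ Finset.range (2 * n), (y ^ 2 ^ i) ^ 2
          = ∑ i ∈ Finset.range (2 * n), y ^ 2 ^ (i + 1) :=
            Finset.sum_congr rfl fun i _ => by rw [← pow_mul, ← pow_succ]
        _ = ∑ i ∈ Finset.range (2 * n), y ^ 2 ^ i := by
            have hA := Finset.sum_range_succ' (fun i => y ^ 2 ^ i) (2 * n)
            have hB := Finset.sum_range_succ (fun i => y ^ 2 ^ i) (2 * n)
            have hend : y ^ 2 ^ (2 * n) = y := by
              have he : (2 : ℕ) ^ (2 * n) = q ^ 2 := by rw [hq, ← pow_mul, mul_comm]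
              rw [he]; exact hpcard y
            have hAB := hA.symm.trans hB
            rw [hend, pow_zero, pow_one] at hAB
            exact add_right_cancel hAB
    rcases mul_eq_zero.mp (show T y * (T y - 1) = 0 by
        rw [mul_sub, mul_one, ← sq, hsq, sub_self]) with h | h
    · exact Or.inl h
    · exact Or.inr (by rwa [sub_eq_zero] at h)
  have hTsplit : ∀ ε : F, ε ^ q = ε → T (ε * x) = ∑ i ∈ Finset.range n, (ε * u) ^ 2 ^ i := by
    intro ε hε
    simp only [hT]
    rw [two_mul, Finset.sum_range_add]
    have e2 : ∀ i : ℕ, (ε * x) ^ 2 ^ (n + i) = (ε * x ^ q) ^ 2 ^ i := by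
      intro i
      rw [pow_add, pow_mul]
      congr 1
      rw [← hq, mul_pow, hε]
    rw [Finset.sum_congr rfl (fun i _ => e2 i), ← Finset.sum_add_distrib]
    refine Finset.sum_congr rfl fun i _ => ?_
    rw [hu, mul_add, add_pow_char_pow (ε * x) (ε * x ^ q) 2 i]
  -- existence of ε₀ with trace 1
  have hKcard : (Finset.univ.filter fun a : F => a ^ q = a).card = q := aux_cardK hq2 hF
  obtain ⟨ε₀, hε₀q, hε₀T⟩ : ∃ ε₀ : F, ε₀ ^ q = ε₀ ∧ T (ε₀ * x) = 1 := by
    by_contra hcon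
    push_neg at hcon
    have hzero : ∀ ε : F, ε ^ q = ε → ∑ i ∈ Finset.range n, (ε * u) ^ 2 ^ i = 0 := by
      intro ε hε
      rw [← hTsplit ε hε]
      rcases hT01 (ε * x) with h | h
      · exact h
      · exact absurd h (hcon ε hε)
    set P : Polynomial F := ∑ i ∈ Finset.range n, Polynomial.C (u ^ 2 ^ i) * Polynomial.X ^ 2 ^ i
      with hP
    have hPeval : ∀ ε : F, Polynomial.eval ε P = ∑ i ∈ Finset.range n, (ε * u) ^ 2 ^ i := by
      intro ε
      rw [hP, Polynomial.eval_finset_sum]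
      refine Finset.sum_congr rfl fun i _ => ?_
      rw [Polynomial.eval_mul, Polynomial.eval_C, Polynomial.eval_pow, Polynomial.eval_X,
        mul_pow, mul_comm]
    have hPcoeff : P.coeff (2 ^ (n - 1)) = u ^ 2 ^ (n - 1) := by
      rw [hP, Polynomial.finset_sum_coeff]
      rw [Finset.sum_eq_single (n - 1)]
      · rw [Polynomial.coeff_C_mul, Polynomial.coeff_X_pow, if_pos rfl, mul_one]
      · intro i _ hne
        rw [Polynomial.coeff_C_mul, Polynomial.coeff_X_pow, if_neg, mul_zero]
        intro h
        exact hne (Nat.pow_right_injective (le_refl 2) h).symm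
      · intro h
        exact absurd (Finset.mem_range.mpr (by omega)) h
    have hPne : P ≠ 0 := by
      intro h
      rw [h, Polynomial.coeff_zero] at hPcoeff
      exact pow_ne_zero _ hune hPcoeff.symm
    have hPdeg : P.natDegree ≤ 2 ^ (n - 1) := by
      rw [hP]
      refine Polynomial.natDegree_sum_le_of_forall_le _ _ fun i hi => ?_
      refine le_trans (Polynomial.natDegree_C_mul_le _ _) ?_
      rw [Polynomial.natDegree_X_pow]
      exact Nat.pow_le_pow_right (by norm_num) (by simp at hi; omega)
    have hsub : (Finset.univ.filter fun a : F => a ^ q = a) ⊆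
        (Finset.univ.filter fun a : F => Polynomial.eval a P = 0) := by
      intro a ha
      simp only [Finset.mem_filter, Finset.mem_univ, true_and] at ha ⊢
      rw [hPeval]
      exact hzero a ha
    have hle := Finset.card_le_card hsub
    have hle2 := aux_card_roots P hPne
    rw [hKcard] at hle
    have hlt : 2 ^ (n - 1) < 2 ^ n := Nat.pow_lt_pow_right (by norm_num) (by omega)
    rw [hq] at hle
    omega
  -- the two fibers
  set A := Finset.univ.filter (fun ε : F => ε ^ q = ε ∧ T (ε * x) = 1) with hA
  set B := Finset.univ.filter (fun ε : F => ε ^ q = ε ∧ T (ε * x) = 0) with hB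
  have hstmt : (Finset.univ.filter fun ε : F => ε ^ q = ε ∧ ε ≠ 0 ∧
      ∑ i ∈ Finset.range (2 * n), (ε * w / (1 + σ * w) ^ 2) ^ 2 ^ i = 1) = A := by
    rw [hA]
    apply Finset.filter_congr
    intro ε _
    have hrw : ε * w / (1 + σ * w) ^ 2 = ε * x := by rw [hx, hd, mul_div_assoc]
    simp only [hrw, hT]
    constructor
    · rintro ⟨h1, _, h3⟩; exact ⟨h1, h3⟩
    · rintro ⟨h1, h3⟩
      refine ⟨h1, ?_, h3⟩
      rintro rfl
      rw [zero_mul] at h3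
      have : ∑ i ∈ Finset.range (2 * n), (0 : F) ^ 2 ^ i = 0 :=
        Finset.sum_eq_zero fun i _ => zero_pow (by positivity)
      rw [this] at h3
      exact one_ne_zero h3.symm
  have hdisj : Disjoint A B := by
    rw [Finset.disjoint_left]
    intro a haA haB
    rw [hA, Finset.mem_filter] at haA
    rw [hB, Finset.mem_filter] at haB
    rw [haA.2.2] at haB
    exact one_ne_zero haB.2.2
  have hunion : A ∪ B = Finset.univ.filter fun ε : F => ε ^ q = ε := by
    ext ε
    simp only [hA, hB, Finset.mem_union, Finset.mem_filter, Finset.mem_univ, true_and]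
    constructor
    · rintro (⟨h1, _⟩ | ⟨h1, _⟩) <;> exact h1
    · intro h1
      rcases hT01 (ε * x) with h | h
      · exact Or.inr ⟨h1, h⟩
      · exact Or.inl ⟨h1, h⟩
  have hmem : ∀ ε : F, ε ∈ A → ε + ε₀ ∈ B := by
    intro ε hε
    rw [hA, Finset.mem_filter] at hε
    rw [hB, Finset.mem_filter]
    refine ⟨Finset.mem_univ _, ?_, ?_⟩
    · rw [hfq, hε.2.1, hε₀q]
    · rw [add_mul, hTadd, hε.2.2, hε₀T, haddself]
  have hmem' : ∀ ε : F, ε ∈ B → ε + ε₀ ∈ A := by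
    intro ε hε
    rw [hB, Finset.mem_filter] at hε
    rw [hA, Finset.mem_filter]
    refine ⟨Finset.mem_univ _, ?_, ?_⟩
    · rw [hfq, hε.2.1, hε₀q]
    · rw [add_mul, hTadd, hε.2.2, hε₀T, zero_add]
  have hinv : ∀ ε : F, ε + ε₀ + ε₀ = ε := by
    intro ε
    rw [add_assoc, haddself, add_zero]
  have hcardAB : A.card = B.card := by
    refine Finset.card_bij' (fun ε _ => ε + ε₀) (fun ε _ => ε + ε₀) ?_ ?_ ?_ ?_
    · intro a ha; exact hmem a ha
    · intro a ha; exact hmem' a ha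
    · intro a _; exact hinv a
    · intro a _; exact hinv a
  have hcardsum : A.card + B.card = q := by
    rw [← Finset.card_union_of_disjoint hdisj, hunion, hKcard]
  rw [hstmt]
  omega
end

section
/- Let q = 2^n and γ ∈ F_{q^4} with γ^{q+1} = 1, and let d = q^3 + q^2 + q - 1. Then for any b ∈ F_{q^4} with b ≠ γ, (γ + b)^d = (γ b^{q^3+q} + γ^{-1}(b^{q^3+q^2} + b^{q^2+q} + 1) + γ^{-2} b^{q^2} + b^{q^3+q^2+q} + b^{q^3} + b^q)/(γ + b). -/
theorem stmt_15 (n : ℕ) (hn : 0 < n) (q d : ℕ) (hq : q = 2 ^ n)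
    (hd : d = q ^ 3 + q ^ 2 + q - 1)
    (F : Type*) [Field F] [Fintype F] (hF : Fintype.card F = q ^ 4)
    (γ : F) (hγ : γ ^ (q + 1) = 1) (b : F) (hb : b ≠ γ) :
    (γ + b) ^ d = (γ * b ^ (q ^ 3 + q) + γ⁻¹ * (b ^ (q ^ 3 + q ^ 2) + b ^ (q ^ 2 + q) + 1)
      + (γ ^ 2)⁻¹ * b ^ (q ^ 2) + b ^ (q ^ 3 + q ^ 2 + q) + b ^ (q ^ 3) + b ^ q) / (γ + b) := by
  have hqpos : 2 ≤ q := by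
    subst hq
    calc 2 = 2 ^ 1 := (pow_one 2).symm
    _ ≤ 2 ^ n := Nat.pow_le_pow_right (by norm_num) hn
  -- characteristic 2
  haveI hcp : CharP F (ringChar F) := ringChar.charP F
  have hpr : (ringChar F).Prime := CharP.char_is_prime F (ringChar F)
  have h2 : ringChar F = 2 := by
    obtain ⟨m, -, hm⟩ := FiniteField.card F (ringChar F)
    have h1 : ringChar F ∣ ringChar F ^ (m : ℕ) := dvd_pow_self _ m.pos.ne'
    rw [← hm, hF, hq, ← pow_mul, mul_comm] at h1
    exact (Nat.prime_dvd_prime_iff_eq hpr Nat.prime_two).mp (hpr.dvd_of_dvd_pow h1)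
  haveI h2' : CharP F 2 := h2 ▸ hcp
  haveI : ExpChar F 2 := ExpChar.prime Nat.prime_two
  have hfrob : ∀ (k : ℕ) (x y : F), (x + y) ^ q ^ k = x ^ q ^ k + y ^ q ^ k := by
    intro k x y
    rw [hq, ← pow_mul]
    haveI := Fact.mk Nat.prime_two
    exact add_pow_char_pow x y 2 (n * k)
  -- γ facts
  have hγ0 : γ ≠ 0 := by
    intro h
    rw [h, zero_pow (by omega)] at hγ
    exact zero_ne_one hγ
  have hγq : γ ^ q = γ⁻¹ := by
    apply eq_inv_of_mul_eq_one_left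
    rw [← pow_succ]
    exact hγ
  have hγq2 : γ ^ q ^ 2 = γ := by
    rw [sq, pow_mul, hγq, inv_pow, hγq, inv_inv]
  have hγq3 : γ ^ q ^ 3 = γ⁻¹ := by
    rw [pow_succ, pow_mul, hγq2, hγq]
  have hne : γ + b ≠ 0 := by
    intro h
    exact hb (by rw [← CharTwo.neg_eq γ]; exact eq_neg_of_add_eq_zero_right h)
  rw [eq_div_iff hne, ← pow_succ]
  have hd1 : d + 1 = q ^ 3 + q ^ 2 + q := by
    rw [hd]; have : 1 ≤ q := by omega
    have : 1 ≤ q ^ 3 + q ^ 2 + q := by nlinarith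
    omega
  rw [hd1, pow_add, pow_add, hfrob 3, hfrob 2, hγq3, hγq2]
  have hq1 : (γ + b) ^ q = γ⁻¹ + b ^ q := by
    have := hfrob 1 γ b
    rwa [pow_one, hγq] at this
  rw [hq1]
  rw [show q ^ 3 + q = q ^ 3 + q from rfl]
  rw [pow_add b (q^3) q, pow_add b (q^3) (q^2), pow_add b (q^2) q,
    pow_add b (q^3 + q^2) q, pow_add b (q^3) (q^2)]
  field_simp
  ring
end

section
/- Let q = 2^n and γ_1, γ_2 ∈ F_{q^4} with γ_1^{q+1} = γ_2^{q+1} = 1, and let d = q^3 + q^2 + q - 1. Then (γ_1 + γ_2)^d = (γ_1^2 + γ_2^2)/(γ_1^2 γ_2^2) whenever γ_1 ≠ γ_2. -/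
theorem stmt_16 (n : ℕ) (hn : 0 < n) (q d : ℕ) (hq : q = 2 ^ n)
    (hd : d = q ^ 3 + q ^ 2 + q - 1)
    (F : Type*) [Field F] [Fintype F] (hF : Fintype.card F = q ^ 4)
    (γ₁ γ₂ : F) (h₁ : γ₁ ^ (q + 1) = 1) (h₂ : γ₂ ^ (q + 1) = 1) (hne : γ₁ ≠ γ₂) :
    (γ₁ + γ₂) ^ d = (γ₁ ^ 2 + γ₂ ^ 2) / (γ₁ ^ 2 * γ₂ ^ 2) := by
  have hq1 : 1 ≤ q := by
    rw [hq]; exact Nat.one_le_two_pow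
  -- the field has characteristic 2
  haveI hch : CharP F 2 := by
    have hp : (ringChar F).Prime := CharP.char_is_prime F _
    haveI := Fact.mk hp
    obtain ⟨m, hm⟩ := FiniteField.card F (ringChar F)
    have hdvd : ringChar F ∣ 2 ^ (4 * n) := by
      have hcard : ringChar F ^ (m : ℕ) = 2 ^ (4 * n) := by
        rw [← hm.2, hF, hq, ← pow_mul, mul_comm]
      exact hcard ▸ dvd_pow_self _ m.ne_zero
    have h2 : ringChar F = 2 :=
      (Nat.prime_dvd_prime_iff_eq hp Nat.prime_two).mp (hp.dvd_of_dvd_pow hdvd)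
    exact h2 ▸ ringChar.charP F
  have hγ₁ : γ₁ ≠ 0 := by
    intro h; rw [h, zero_pow (Nat.succ_ne_zero q)] at h₁; exact zero_ne_one h₁
  have hγ₂ : γ₂ ≠ 0 := by
    intro h; rw [h, zero_pow (Nat.succ_ne_zero q)] at h₂; exact zero_ne_one h₂
  have hinv : ∀ γ : F, γ ^ (q + 1) = 1 → γ ^ q = γ⁻¹ := by
    intro γ h
    exact eq_inv_of_mul_eq_one_left (by rw [← pow_succ]; exact h)
  have e₁ : γ₁ ^ q = γ₁⁻¹ := hinv γ₁ h₁
  have e₂ : γ₂ ^ q = γ₂⁻¹ := hinv γ₂ h₂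
  have frob : ∀ x y : F, (x + y) ^ q = x ^ q + y ^ q := by
    intro x y; rw [hq]
    haveI := Fact.mk Nat.prime_two
    exact add_pow_char_pow x y 2 n
  set s : F := γ₁ + γ₂ with hs
  have hsne : s ≠ 0 := by
    rw [hs, ← CharTwo.sub_eq_add]; exact sub_ne_zero.mpr hne
  have f1 : s ^ q = γ₁⁻¹ + γ₂⁻¹ := by rw [hs, frob, e₁, e₂]
  have f2 : s ^ (q ^ 2) = s := by
    rw [pow_two, pow_mul, f1, frob, inv_pow, inv_pow, e₁, e₂, inv_inv, inv_inv]
  have f3 : s ^ (q ^ 3) = γ₁⁻¹ + γ₂⁻¹ := by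
    have : q ^ 3 = q ^ 2 * q := by ring
    rw [this, pow_mul, f2, f1]
  have hd1 : d + 1 = q ^ 3 + q ^ 2 + q := by
    rw [hd, Nat.sub_add_cancel (le_trans hq1 (Nat.le_add_left q _))]
  have key : s ^ d * s = (γ₁⁻¹ + γ₂⁻¹) ^ 2 * s := by
    rw [← pow_succ, hd1, pow_add, pow_add, f1, f2, f3]; ring
  have hsd : s ^ d = (γ₁⁻¹ + γ₂⁻¹) ^ 2 := mul_right_cancel₀ hsne key
  rw [hsd, CharTwo.add_sq]
  field_simp
  ring
end

section
/- Let q = 2^n and b ∈ F_{q^4} with b ∉ F_{q^2}. If b^{q^2+1} = 1 and b + b^q + b^{q^2} + b^{q^3} = 0, then a contradiction follows; i.e., there is no b ∈ F_{q^4} \ F_{q^2} with b^{q^2+1} = 1 and Tr_{F_{q^4}/F_q}(b) = 0. -/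
theorem stmt_17 (n : ℕ) (hn : 0 < n) (q : ℕ) (hq : q = 2 ^ n)
    (F : Type*) [Field F] [Fintype F] (hF : Fintype.card F = q ^ 4) :
    ¬ ∃ b : F, b ^ (q ^ 2) ≠ b ∧ b ^ (q ^ 2 + 1) = 1 ∧
      b + b ^ q + b ^ (q ^ 2) + b ^ (q ^ 3) = 0 := by
  rintro ⟨b, hb1, hb2, hb3⟩
  have hb0 : b ≠ 0 := by
    rintro rfl
    rw [zero_pow (Nat.succ_ne_zero _)] at hb2
    exact zero_ne_one hb2
  -- characteristic 2
  have hcc : ((Fintype.card F : ℕ) : F) = 0 := FiniteField.cast_card_eq_zero F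
  have h2 : (2 : F) = 0 := by
    rw [hF, hq] at hcc
    have h0 : (2 : F) ^ (n * 4) = 0 := by
      push_cast at hcc
      rw [← pow_mul] at hcc
      exact_mod_cast hcc
    exact pow_eq_zero_iff (by positivity) |>.mp h0
  -- b * b^{q^2} = 1
  have h1 : b * b ^ (q ^ 2) = 1 := by
    rw [pow_succ] at hb2; linear_combination hb2
  -- b^q * b^{q^3} = 1
  have hq3 : b ^ (q ^ 3) = (b ^ (q ^ 2)) ^ q := by
    rw [← pow_mul]; ring_nf
  have hq2 : b ^ (q ^ 2) = (b ^ q) ^ q := by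
    rw [← pow_mul]; ring_nf
  have h1' : b ^ q * b ^ (q ^ 3) = 1 := by
    have := congrArg (· ^ q) h1
    simpa [mul_pow, ← hq3] using this
  -- key factorization
  have key : (b + b ^ q) * (b * b ^ q + 1) = 0 := by
    linear_combination (b * b ^ q) * hb3 - (b ^ q) * h1 - b * h1'
  rcases mul_eq_zero.mp key with h | h
  · -- b^q = b
    have hc : b ^ q = b := by linear_combination h - b * h2
    exact hb1 (by rw [hq2, hc, hc])
  · -- b * b^q = 1, so b^q = b^{q^2}
    have hc : b * b ^ q = 1 := by linear_combination h - h2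
    have heq : b ^ q = b ^ (q ^ 2) := mul_left_cancel₀ hb0 (by rw [hc, h1])
    have heq2 : b ^ (q ^ 2) = b ^ (q ^ 3) := by
      rw [hq2, hq3, heq]
    have hcard : b ^ (q ^ 4) = b := by rw [← hF]; exact FiniteField.pow_card b
    have hq4 : b ^ (q ^ 4) = (b ^ (q ^ 3)) ^ q := by rw [← pow_mul]; ring_nf
    have : b ^ (q ^ 2) = b := by
      calc b ^ (q ^ 2) = b ^ (q ^ 3) := heq2
        _ = (b ^ (q ^ 2)) ^ q := hq3
        _ = (b ^ (q ^ 3)) ^ q := by rw [heq2]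
        _ = b ^ (q ^ 4) := hq4.symm
        _ = b := hcard
    exact hb1 this
end

section
/- Let n be a positive integer, q = 2^n, and d = q^3 + q^2 + q - 1. For every b ∈ F_{q^4} with b ∉ F_{q^2}, the equation (x+1)^d + x^d = b has at most 2 solutions x in F_{q^4}. -/
set_option maxRecDepth 8000

set_option maxHeartbeats 1600000 in
lemma key_stmt18 {F : Type*} [Field F] [Fintype F] (n q d : ℕ) (hn : 0 < n)
    (hq : q = 2 ^ n) (hd : d = q ^ 3 + q ^ 2 + q - 1) (hF : Fintype.card F = q ^ 4)
    [CharP F 2] (b x : F) (hb : b ^ (q ^ 2) ≠ b) (hx : (x + 1) ^ d + x ^ d = b) :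
    ∃ c W : F,
      c * (b + b ^ q + b ^ (q ^ 2) + b ^ (q ^ 3)) = 1 + b * b ^ q * b ^ (q ^ 2) * b ^ (q ^ 3) ∧
      W * (b + b ^ q + b ^ (q ^ 2) + b ^ (q ^ 3)) = (b + b ^ (q ^ 2)) * (1 + b ^ q * b ^ (q ^ 3)) ∧
      (b + b ^ (q ^ 2)) * (x ^ 2 + x) ^ 2 = c * W + b ^ (q ^ 2) * (W ^ 2 + W) := by
  haveI : Fact (Nat.Prime 2) := ⟨Nat.prime_two⟩
  have h2 : (2 : F) = 0 := by exact_mod_cast CharP.cast_eq_zero F 2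
  have hq0 : q ≠ 0 := by rw [hq]; positivity
  have hq2 : 2 ≤ q := by
    rw [hq]
    calc 2 = 2 ^ 1 := (pow_one 2).symm
    _ ≤ 2 ^ n := Nat.pow_le_pow_right (by norm_num) hn
  have hqle : q ≤ q ^ 3 + q ^ 2 + q := Nat.le_add_left q _
  have hd2 : d + 2 = q ^ 3 + q ^ 2 + q + 1 := by omega
  have hd0 : d ≠ 0 := by omega
  have fr : ∀ a c : F, (a + c) ^ q = a ^ q + c ^ q := by
    intro a c; rw [hq]; exact add_pow_char_pow a c 2 n
  have frk : ∀ (k : ℕ) (a c : F), (a + c) ^ (q ^ k) = a ^ (q ^ k) + c ^ (q ^ k) := by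
    intro k a c; rw [hq, ← pow_mul]; exact add_pow_char_pow a c 2 (n * k)
  have hx4 : x ^ (q ^ 4) = x := by rw [← hF]; exact FiniteField.pow_card x
  have hbone : b ≠ 1 := fun h => hb (by rw [h, one_pow])
  have hx0 : x ≠ 0 := by
    intro h
    apply hbone
    rw [h] at hx
    simpa [zero_pow hd0] using hx.symm
  have hx1 : x + 1 ≠ 0 := by
    intro h
    have hxe : x = 1 := by linear_combination h - h2
    rw [hxe] at hx
    have h11 : (1 : F) + 1 = 0 := by linear_combination h2
    rw [h11, zero_pow hd0, one_pow] at hx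
    exact hbone (by linear_combination - hx)
  have hqq : q * q = q ^ 2 := by ring
  have hqq3 : q ^ 2 * q = q ^ 3 := by ring
  have hqq4 : q ^ 3 * q = q ^ 4 := by ring
  set z := x ^ q with hz
  set y := x ^ (q ^ 2) with hy
  set w := x ^ (q ^ 3) with hw
  set b1 := b ^ q with hb1d
  set b2 := b ^ (q ^ 2) with hb2d
  set b3 := b ^ (q ^ 3) with hb3d
  have hzq : z ^ q = y := by rw [hz, hy, ← pow_mul, hqq]
  have hyq : y ^ q = w := by rw [hy, hw, ← pow_mul, hqq3]
  have hwq : w ^ q = x := by rw [hw, ← pow_mul, hqq4, hx4]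
  have hbq1 : b1 ^ q = b2 := by rw [hb1d, hb2d, ← pow_mul, hqq]
  have hbq2 : b2 ^ q = b3 := by rw [hb2d, hb3d, ← pow_mul, hqq3]
  have hz1 : (x + 1) ^ q = z + 1 := by rw [fr, one_pow, hz]
  have hy1 : (z + 1) ^ q = y + 1 := by rw [fr, one_pow, hzq]
  have hw1 : (y + 1) ^ q = w + 1 := by rw [fr, one_pow, hyq]
  have hx1p : (w + 1) ^ q = x + 1 := by rw [fr, one_pow, hwq]
  have huq : (x * z * y * w) ^ q = x * z * y * w := by
    rw [mul_pow, mul_pow, mul_pow, hzq, hyq, hwq, ← hz]; ring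
  have hvq : ((x + 1) * (z + 1) * (y + 1) * (w + 1)) ^ q
      = (x + 1) * (z + 1) * (y + 1) * (w + 1) := by
    rw [mul_pow, mul_pow, mul_pow, hz1, hy1, hw1, hx1p]; ring
  have hcq : (x * z * y * w + (x + 1) * (z + 1) * (y + 1) * (w + 1)) ^ q
      = x * z * y * w + (x + 1) * (z + 1) * (y + 1) * (w + 1) := by
    rw [fr, huq, hvq]
  have hu2 : x ^ d * x ^ 2 = x * z * y * w := by
    rw [← pow_add, hd2, pow_add, pow_add, pow_add, pow_one, ← hz, ← hy, ← hw]; ring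
  have hv2 : (x + 1) ^ d * (x + 1) ^ 2 = (x + 1) * (z + 1) * (y + 1) * (w + 1) := by
    rw [← pow_add, hd2, pow_add, pow_add, pow_add, pow_one,
      frk 3 x 1, one_pow, frk 2 x 1, one_pow, fr x 1, one_pow, ← hz, ← hy, ← hw]
    ring
  have e0 : b * (x ^ 2 + x) ^ 2 = (x*z*y*w + (x+1)*(z+1)*(y+1)*(w+1)) * x ^ 2 + x * z * y * w := by
    linear_combination (x ^ 2) * hv2 + ((x + 1) ^ 2) * hu2 - (x ^ 2 * (x + 1) ^ 2) * hx + (x^2*z*y*w) * h2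
  have conj : ∀ B X : F, B * (X ^ 2 + X) ^ 2 = (x*z*y*w + (x+1)*(z+1)*(y+1)*(w+1)) * X ^ 2 + x * z * y * w →
      B ^ q * ((X ^ q) ^ 2 + X ^ q) ^ 2 = (x*z*y*w + (x+1)*(z+1)*(y+1)*(w+1)) * (X ^ q) ^ 2 + x * z * y * w := by
    intro B X hBX
    calc B ^ q * ((X ^ q) ^ 2 + X ^ q) ^ 2
        = (B * (X ^ 2 + X) ^ 2) ^ q := by
          rw [mul_pow, pow_right_comm (X ^ 2 + X) 2 q, fr (X ^ 2) X, pow_right_comm X 2 q]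
      _ = ((x*z*y*w + (x+1)*(z+1)*(y+1)*(w+1)) * X ^ 2 + x * z * y * w) ^ q := by rw [hBX]
      _ = (x*z*y*w + (x+1)*(z+1)*(y+1)*(w+1)) * (X ^ q) ^ 2 + x * z * y * w := by
          rw [fr ((x*z*y*w + (x+1)*(z+1)*(y+1)*(w+1)) * X ^ 2) (x * z * y * w), mul_pow, hcq, huq, pow_right_comm X 2 q]
  have e1 : b1 * (z ^ 2 + z) ^ 2 = (x*z*y*w + (x+1)*(z+1)*(y+1)*(w+1)) * z ^ 2 + x * z * y * w := by
    have h := conj b x e0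
    rwa [← hz, ← hb1d] at h
  have e2 : b2 * (y ^ 2 + y) ^ 2 = (x*z*y*w + (x+1)*(z+1)*(y+1)*(w+1)) * y ^ 2 + x * z * y * w := by
    have h := conj b1 z e1
    rwa [hzq, hbq1] at h
  have e3 : b3 * (w ^ 2 + w) ^ 2 = (x*z*y*w + (x+1)*(z+1)*(y+1)*(w+1)) * w ^ 2 + x * z * y * w := by
    have h := conj b2 y e2
    rwa [hyq, hbq2] at h
  have hz0 : z ≠ 0 := by rw [hz]; exact pow_ne_zero _ hx0
  have hy0 : y ≠ 0 := by rw [hy]; exact pow_ne_zero _ hx0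
  have hw0 : w ≠ 0 := by rw [hw]; exact pow_ne_zero _ hx0
  have hz1n : z + 1 ≠ 0 := by rw [← hz1]; exact pow_ne_zero _ hx1
  have hy1n : y + 1 ≠ 0 := by rw [← hy1]; exact pow_ne_zero _ hz1n
  have hw1n : w + 1 ≠ 0 := by rw [← hw1]; exact pow_ne_zero _ hy1n
  have ht : x ^ 2 + x ≠ 0 := by
    intro h; apply mul_ne_zero hx0 hx1; linear_combination h
  have htz : z ^ 2 + z ≠ 0 := by
    intro h; apply mul_ne_zero hz0 hz1n; linear_combination h
  have hty : y ^ 2 + y ≠ 0 := by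
    intro h; apply mul_ne_zero hy0 hy1n; linear_combination h
  have htw : w ^ 2 + w ≠ 0 := by
    intro h; apply mul_ne_zero hw0 hw1n; linear_combination h
  have hA : (b + b2) * (((x^2+x)*(y^2+y))^2) = (x + y) ^ 2 * ((x*z*y*w + (x+1)*(z+1)*(y+1)*(w+1)) * (x * y) ^ 2 + (x * z * y * w) * (x + y + 1) ^ 2) := by
    linear_combination ((y ^ 2 + y) ^ 2) * e0 + ((x ^ 2 + x) ^ 2) * e2 + (x^2*y^2 + x^2*y^2*w + 2*x^2*y^3 + 2*x^2*y^3*w + x^2*y^4 + x^2*y^4*w + x^2*z*y^2 + 2*x^2*z*y^3 - x^2*z*y^3*w + x^2*z*y^4 - x^2*z*y^4*w + 2*x^3*y^2 + 2*x^3*y^2*w + 2*x^3*y^3 + 2*x^3*y^3*w + 2*x^3*z*y^2 - x^3*z*y^2*w + 2*x^3*z*y^3 + x^3*z*y^4*w + x^4*y^2 + x^4*y^2*w - x^4*y^4 - x^4*y^4*w + x^4*z*y^2 - x^4*z*y^2*w + x^4*z*y^3*w - x^4*z*y^4 - 2*x^4*z*y^4*w) * h2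
  have hAp : (b1 + b3) * (((z^2+z)*(w^2+w))^2) = (z + w) ^ 2 * ((x*z*y*w + (x+1)*(z+1)*(y+1)*(w+1)) * (z * w) ^ 2 + (x * z * y * w) * (z + w + 1) ^ 2) := by
    linear_combination ((w ^ 2 + w) ^ 2) * e1 + ((z ^ 2 + z) ^ 2) * e3 + (z^2*w^2 + 2*z^2*w^3 + z^2*w^4 + z^2*y*w^2 + 2*z^2*y*w^3 + z^2*y*w^4 + 2*z^3*w^2 + 2*z^3*w^3 + 2*z^3*y*w^2 + 2*z^3*y*w^3 + z^4*w^2 - z^4*w^4 + z^4*y*w^2 - z^4*y*w^4 + x*z^2*w^2 + 2*x*z^2*w^3 + x*z^2*w^4 - x*z^2*y*w^3 - x*z^2*y*w^4 + 2*x*z^3*w^2 + 2*x*z^3*w^3 - x*z^3*y*w^2 + x*z^3*y*w^4 + x*z^4*w^2 - x*z^4*w^4 - x*z^4*y*w^2 + x*z^4*y*w^3 - 2*x*z^4*y*w^4) * h2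
  have hG : (b * b2) * (((x^2+x)*(y^2+y))^2) = (x*z*y*w + (x+1)*(z+1)*(y+1)*(w+1)) ^ 2 * (x * y) ^ 2 + (x*z*y*w + (x+1)*(z+1)*(y+1)*(w+1)) * (x * z * y * w) * (x + y) ^ 2 + (x * z * y * w) ^ 2 := by
    linear_combination (b2 * (y ^ 2 + y) ^ 2) * e0 + ((x*z*y*w + (x+1)*(z+1)*(y+1)*(w+1)) * x ^ 2 + x * z * y * w) * e2 + (-x^2*z*y^2*w - x^2*z*y^2*w^2 - x^2*z*y^3*w - x^2*z*y^3*w^2 - x^2*z^2*y^2*w - x^2*z^2*y^2*w^2 - x^2*z^2*y^3*w - x^2*z^2*y^3*w^2 - x^3*z*y^2*w - x^3*z*y^2*w^2 - x^3*z*y^3*w - x^3*z*y^3*w^2 - x^3*z^2*y^2*w - x^3*z^2*y^2*w^2 - x^3*z^2*y^3*w - 2*x^3*z^2*y^3*w^2) * h2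
  have hGp : (b1 * b3) * (((z^2+z)*(w^2+w))^2) = (x*z*y*w + (x+1)*(z+1)*(y+1)*(w+1)) ^ 2 * (z * w) ^ 2 + (x*z*y*w + (x+1)*(z+1)*(y+1)*(w+1)) * (x * z * y * w) * (z + w) ^ 2 + (x * z * y * w) ^ 2 := by
    linear_combination (b3 * (w ^ 2 + w) ^ 2) * e1 + ((x*z*y*w + (x+1)*(z+1)*(y+1)*(w+1)) * z ^ 2 + x * z * y * w) * e3 + (-x*z^2*y*w^2 - x*z^2*y*w^3 - x*z^2*y^2*w^2 - x*z^2*y^2*w^3 - x*z^3*y*w^2 - x*z^3*y*w^3 - x*z^3*y^2*w^2 - x*z^3*y^2*w^3 - x^2*z^2*y*w^2 - x^2*z^2*y*w^3 - x^2*z^2*y^2*w^2 - x^2*z^2*y^2*w^3 - x^2*z^3*y*w^2 - x^2*z^3*y*w^3 - x^2*z^3*y^2*w^2 - 2*x^2*z^3*y^2*w^3) * h2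
  have trelX : (b + b2) * (x ^ 2 + x) ^ 2
      = (x*z*y*w + (x+1)*(z+1)*(y+1)*(w+1)) * (x + y) ^ 2 + b2 * (((x + y) ^ 2) ^ 2 + (x + y) ^ 2) := by
    linear_combination e0 + e2 + (-y^2*b2 - y^3*b2 - y^4*b2 - x*y - x*y*b2 - x*y*w - x*y^2 - x*y^2*w - 2*x*y^3*b2 - x*z*y - x*z*y^2 - x*z*y^2*w - x^2*y - x^2*y*w - x^2*y^2 - 3*x^2*y^2*b2 - x^2*y^2*w - x^2*z*y - x^2*z*y*w - x^2*z*y^2 - 2*x^2*z*y^2*w + x^3*b2 - 2*x^3*y*b2) * h2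
  obtain ⟨s, hs_def⟩ : ∃ t : F, t = x + y := ⟨_, rfl⟩
  obtain ⟨p, hp_def⟩ : ∃ t : F, t = x * y := ⟨_, rfl⟩
  obtain ⟨S, hS_def⟩ : ∃ t : F, t = z + w := ⟨_, rfl⟩
  obtain ⟨P, hP_def⟩ : ∃ t : F, t = z * w := ⟨_, rfl⟩
  have hA2 : (b + b2) * (p*(p+s+1))^2 = s ^ 2 * ((p*P + (p+s+1)*(P+S+1)) * p ^ 2 + (p * P) * (s + 1) ^ 2) := by
    rw [hs_def, hp_def, hS_def, hP_def]; linear_combination hA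
  have hA2p : (b1 + b3) * (P*(P+S+1))^2 = S ^ 2 * ((p*P + (p+s+1)*(P+S+1)) * P ^ 2 + (p * P) * (S + 1) ^ 2) := by
    rw [hs_def, hp_def, hS_def, hP_def]; linear_combination hAp
  have hG2 : (b * b2) * (p*(p+s+1))^2 = (p*P + (p+s+1)*(P+S+1)) ^ 2 * p ^ 2 + (p*P + (p+s+1)*(P+S+1)) * (p * P) * s ^ 2 + (p * P) ^ 2 := by
    rw [hs_def, hp_def, hS_def, hP_def]; linear_combination hG
  have hG2p : (b1 * b3) * (P*(P+S+1))^2 = (p*P + (p+s+1)*(P+S+1)) ^ 2 * P ^ 2 + (p*P + (p+s+1)*(P+S+1)) * (p * P) * S ^ 2 + (p * P) ^ 2 := by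
    rw [hs_def, hp_def, hS_def, hP_def]; linear_combination hGp
  have crelM : (p*P + (p+s+1)*(P+S+1)) * (b + b1 + b2 + b3) * ((p*(p+s+1))^2 * (P*(P+S+1))^2)
      = (1 + b * b1 * b2 * b3) * ((p*(p+s+1))^2 * (P*(P+S+1))^2) := by
    linear_combination ((p*P + (p+s+1)*(P+S+1)) * (P*(P+S+1))^2) * hA2 + ((p*P + (p+s+1)*(P+S+1)) * (p*(p+s+1))^2) * hA2p - ((p*P + (p+s+1)*(P+S+1))^2*P^2 + (p*P + (p+s+1)*(P+S+1))*(p*P)*S^2 + (p*P)^2) * hG2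
      - (b * b2 * (p*(p+s+1))^2) * hG2p + (-p^2*P^2 - 3*p^2*P^3 - 4*p^2*P^4 - 3*p^2*P^5 - p^2*P^6 - 3*p^2*S*P^2 - 7*p^2*S*P^3 - 7*p^2*S*P^4 - 3*p^2*S*P^5 - 3*p^2*S^2*P^2 - 5*p^2*S^2*P^3 - 3*p^2*S^2*P^4 - p^2*S^3*P^2 - p^2*S^3*P^3 - 3*p^3*P^2 - 12*p^3*P^3 - 20*p^3*P^4 - 17*p^3*P^5 - 6*p^3*P^6 - 10*p^3*S*P^2 - 32*p^3*S*P^3 - 38*p^3*S*P^4 - 17*p^3*S*P^5 - 12*p^3*S^2*P^2 - 27*p^3*S^2*P^3 - 17*p^3*S^2*P^4 - 6*p^3*S^3*P^2 - 7*p^3*S^3*P^3 - p^3*S^4*P^2 - 4*p^4*P^2 - 20*p^4*P^3 - 41*p^4*P^4 - 38*p^4*P^5 - 14*p^4*P^6 - 14*p^4*S*P^2 - 56*p^4*S*P^3 - 79*p^4*S*P^4 - 38*p^4*S*P^5 - 20*p^4*S^2*P^2 - 53*p^4*S^2*P^3 - 37*p^4*S^2*P^4 - 14*p^4*S^3*P^2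 - 17*p^4*S^3*P^3 - 4*p^4*S^4*P^2 - 3*p^5*P^2 - 17*p^5*P^3 - 38*p^5*P^4 - 40*p^5*P^5 - 16*p^5*P^6 - 10*p^5*S*P^2 - 45*p^5*S*P^3 - 72*p^5*S*P^4 - 40*p^5*S*P^5 - 16*p^5*S^2*P^2 - 47*p^5*S^2*P^3 - 36*p^5*S^2*P^4 - 14*p^5*S^3*P^2 - 19*p^5*S^3*P^3 - 5*p^5*S^4*P^2 - p^6*P^2 - 6*p^6*P^3 - 14*p^6*P^4 - 16*p^6*P^5 - 8*p^6*P^6 - 3*p^6*S*P^2 - 14*p^6*S*P^3 - 24*p^6*S*P^4 - 16*p^6*S*P^5 - 5*p^6*S^2*P^2 - 16*p^6*S^2*P^3 - 14*p^6*S^2*P^4 - 5*p^6*S^3*P^2 - 8*p^6*S^3*P^3 - 2*p^6*S^4*P^2 - 3*s*p^2*P^2 - 10*s*p^2*P^3 - 14*s*p^2*P^4 - 10*s*p^2*P^5 - 3*s*p^2*P^6 - 10*s*p^2*S*P^2 - 26*s*p^2*S*P^3 - 26*s*p^2*S*P^4 - 10*s*p^2*S*P^5 - 11*s*p^2*S^2*P^2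 - 20*s*p^2*S^2*P^3 - 11*s*p^2*S^2*P^4 - 4*s*p^2*S^3*P^2 - 4*s*p^2*S^3*P^3 - 7*s*p^3*P^2 - 32*s*p^3*P^3 - 56*s*p^3*P^4 - 45*s*p^3*P^5 - 14*s*p^3*P^6 - 26*s*p^3*S*P^2 - 92*s*p^3*S*P^3 - 110*s*p^3*S*P^4 - 45*s*p^3*S*P^5 - 34*s*p^3*S^2*P^2 - 80*s*p^3*S^2*P^3 - 48*s*p^3*S^2*P^4 - 18*s*p^3*S^3*P^2 - 20*s*p^3*S^3*P^3 - 3*s*p^3*S^4*P^2 - 7*s*p^4*P^2 - 38*s*p^4*P^3 - 79*s*p^4*P^4 - 72*s*p^4*P^5 - 24*s*p^4*P^6 - 26*s*p^4*S*P^2 - 110*s*p^4*S*P^3 - 156*s*p^4*S*P^4 - 72*s*p^4*S*P^5 - 39*s*p^4*S^2*P^2 - 105*s*p^4*S^2*P^3 - 71*s*p^4*S^2*P^4 - 28*s*p^4*S^3*P^2 - 33*s*p^4*S^3*P^3 - 8*s*p^4*S^4*P^2 - 3*s*p^5*P^2 - 17*s*p^5*P^3 - 38*s*p^5*P^4 -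 40*s*p^5*P^5 - 16*s*p^5*P^6 - 10*s*p^5*S*P^2 - 45*s*p^5*S*P^3 - 72*s*p^5*S*P^4 - 40*s*p^5*S*P^5 - 16*s*p^5*S^2*P^2 - 47*s*p^5*S^2*P^3 - 36*s*p^5*S^2*P^4 - 14*s*p^5*S^3*P^2 - 19*s*p^5*S^3*P^3 - 5*s*p^5*S^4*P^2 - 3*s^2*p^2*P^2 - 12*s^2*p^2*P^3 - 20*s^2*p^2*P^4 - 16*s^2*p^2*P^5 - 5*s^2*p^2*P^6 - 11*s^2*p^2*S*P^2 - 34*s^2*p^2*S*P^3 - 39*s^2*p^2*S*P^4 - 16*s^2*p^2*S*P^5 - 13*s^2*p^2*S^2*P^2 - 28*s^2*p^2*S^2*P^3 - 17*s^2*p^2*S^2*P^4 - 5*s^2*p^2*S^3*P^2 - 6*s^2*p^2*S^3*P^3 - 5*s^2*p^3*P^2 - 27*s^2*p^3*P^3 - 53*s^2*p^3*P^4 - 47*s^2*p^3*P^5 - 16*s^2*p^3*P^6 - 20*s^2*p^3*S*P^2 - 80*s^2*p^3*S*P^3 - 105*s^2*p^3*S*P^4 - 47*s^2*p^3*S*P^5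 - 28*s^2*p^3*S^2*P^2 - 72*s^2*p^3*S^2*P^3 - 47*s^2*p^3*S^2*P^4 - 16*s^2*p^3*S^3*P^2 - 19*s^2*p^3*S^3*P^3 - 3*s^2*p^3*S^4*P^2 - 3*s^2*p^4*P^2 - 17*s^2*p^4*P^3 - 37*s^2*p^4*P^4 - 36*s^2*p^4*P^5 - 14*s^2*p^4*P^6 - 11*s^2*p^4*S*P^2 - 48*s^2*p^4*S*P^3 - 71*s^2*p^4*S*P^4 - 36*s^2*p^4*S*P^5 - 17*s^2*p^4*S^2*P^2 - 47*s^2*p^4*S^2*P^3 - 34*s^2*p^4*S^2*P^4 - 13*s^2*p^4*S^3*P^2 - 16*s^2*p^4*S^3*P^3 - 4*s^2*p^4*S^4*P^2 - s^3*p^2*P^2 - 6*s^3*p^2*P^3 - 14*s^3*p^2*P^4 - 14*s^3*p^2*P^5 - 5*s^3*p^2*P^6 - 4*s^3*p^2*S*P^2 - 18*s^3*p^2*S*P^3 - 28*s^3*p^2*S*P^4 - 14*s^3*p^2*S*P^5 - 5*s^3*p^2*S^2*P^2 - 16*s^3*p^2*S^2*P^3 - 13*s^3*p^2*S^2*P^4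 - 2*s^3*p^2*S^3*P^2 - 4*s^3*p^2*S^3*P^3 - s^3*p^3*P^2 - 7*s^3*p^3*P^3 - 17*s^3*p^3*P^4 - 19*s^3*p^3*P^5 - 8*s^3*p^3*P^6 - 4*s^3*p^3*S*P^2 - 20*s^3*p^3*S*P^3 - 33*s^3*p^3*S*P^4 - 19*s^3*p^3*S*P^5 - 6*s^3*p^3*S^2*P^2 - 19*s^3*p^3*S^2*P^3 - 16*s^3*p^3*S^2*P^4 - 4*s^3*p^3*S^3*P^2 - 6*s^3*p^3*S^3*P^3 - s^3*p^3*S^4*P^2 - s^4*p^2*P^3 - 4*s^4*p^2*P^4 - 5*s^4*p^2*P^5 - 2*s^4*p^2*P^6 - 3*s^4*p^2*S*P^3 - 8*s^4*p^2*S*P^4 - 5*s^4*p^2*S*P^5 - 3*s^4*p^2*S^2*P^3 - 4*s^4*p^2*S^2*P^4 - s^4*p^2*S^3*P^3) * h2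
  have srelM : s ^ 2 * (b + b1 + b2 + b3) * ((p*(p+s+1))^2 * (P*(P+S+1))^2)
      = (b + b2) * (1 + b1 * b3) * ((p*(p+s+1))^2 * (P*(P+S+1))^2) := by
    linear_combination (s ^ 2 * (P*(P+S+1))^2 - (P*(P+S+1))^2 - ((p*P + (p+s+1)*(P+S+1))^2*P^2 + (p*P + (p+s+1)*(P+S+1))*(p*P)*S^2 + (p*P)^2)) * hA2 + (s ^ 2 * (p*(p+s+1))^2) * hA2p
      - ((b + b2) * (p*(p+s+1))^2) * hG2p + (-s^2*p*P^3 - 2*s^2*p*P^4 - s^2*p*P^5 - 2*s^2*p*S*P^3 - 2*s^2*p*S*P^4 - s^2*p*S^2*P^3 - s^2*p^2*P^2 - 4*s^2*p^2*P^3 - 6*s^2*p^2*P^4 - 3*s^2*p^2*P^5 - 3*s^2*p^2*S*P^2 - 8*s^2*p^2*S*P^3 - 6*s^2*p^2*S*P^4 - 3*s^2*p^2*S^2*P^2 - 4*s^2*p^2*S^2*P^3 - s^2*p^2*S^3*P^2 - 2*s^2*p^3*P^2 - 9*s^2*p^3*P^3 - 12*s^2*p^3*P^4 - 6*s^2*p^3*P^5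 - 6*s^2*p^3*S*P^2 - 17*s^2*p^3*S*P^3 - 12*s^2*p^3*S*P^4 - 6*s^2*p^3*S^2*P^2 - 8*s^2*p^3*S^2*P^3 - 2*s^2*p^3*S^3*P^2 - 2*s^2*p^4*P^2 - 8*s^2*p^4*P^3 - 12*s^2*p^4*P^4 - 6*s^2*p^4*P^5 - 5*s^2*p^4*S*P^2 - 15*s^2*p^4*S*P^3 - 12*s^2*p^4*S*P^4 - 6*s^2*p^4*S^2*P^2 - 7*s^2*p^4*S^2*P^3 - 3*s^2*p^4*S^3*P^2 - s^2*p^5*P^2 - 4*s^2*p^5*P^3 - 6*s^2*p^5*P^4 - 4*s^2*p^5*P^5 - 2*s^2*p^5*S*P^2 - 6*s^2*p^5*S*P^3 - 6*s^2*p^5*S*P^4 - 3*s^2*p^5*S^2*P^2 - 4*s^2*p^5*S^2*P^3 - 2*s^2*p^5*S^3*P^2 - 3*s^3*p*P^3 - 6*s^3*p*P^4 - 3*s^3*p*P^5 - 6*s^3*p*S*P^3 - 6*s^3*p*S*P^4 - 3*s^3*p*S^2*P^3 - 2*s^3*p^2*P^2 - 9*s^3*p^2*P^3 - 15*s^3*p^2*P^4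 - 8*s^3*p^2*P^5 - 6*s^3*p^2*S*P^2 - 18*s^3*p^2*S*P^3 - 15*s^3*p^2*S*P^4 - 6*s^3*p^2*S^2*P^2 - 9*s^3*p^2*S^2*P^3 - 2*s^3*p^2*S^3*P^2 - 3*s^3*p^3*P^2 - 14*s^3*p^3*P^3 - 19*s^3*p^3*P^4 - 10*s^3*p^3*P^5 - 9*s^3*p^3*S*P^2 - 26*s^3*p^3*S*P^3 - 19*s^3*p^3*S*P^4 - 9*s^3*p^3*S^2*P^2 - 12*s^3*p^3*S^2*P^3 - 3*s^3*p^3*S^3*P^2 - 2*s^3*p^4*P^2 - 8*s^3*p^4*P^3 - 12*s^3*p^4*P^4 - 6*s^3*p^4*P^5 - 5*s^3*p^4*S*P^2 - 15*s^3*p^4*S*P^3 - 12*s^3*p^4*S*P^4 - 6*s^3*p^4*S^2*P^2 - 7*s^3*p^4*S^2*P^3 - 3*s^3*p^4*S^3*P^2 - 3*s^4*p*P^3 - 6*s^4*p*P^4 - 3*s^4*p*P^5 - 6*s^4*p*S*P^3 - 6*s^4*p*S*P^4 - 3*s^4*p*S^2*P^3 - s^4*p^2*P^2 - 6*s^4*p^2*P^3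 - 12*s^4*p^2*P^4 - 7*s^4*p^2*P^5 - 3*s^4*p^2*S*P^2 - 12*s^4*p^2*S*P^3 - 12*s^4*p^2*S*P^4 - 3*s^4*p^2*S^2*P^2 - 6*s^4*p^2*S^2*P^3 - s^4*p^2*S^3*P^2 - s^4*p^3*P^2 - 5*s^4*p^3*P^3 - 7*s^4*p^3*P^4 - 4*s^4*p^3*P^5 - 3*s^4*p^3*S*P^2 - 9*s^4*p^3*S*P^3 - 7*s^4*p^3*S*P^4 - 3*s^4*p^3*S^2*P^2 - 4*s^4*p^3*S^2*P^3 - s^4*p^3*S^3*P^2 - s^5*p*P^3 - 2*s^5*p*P^4 - s^5*p*P^5 - 2*s^5*p*S*P^3 - 2*s^5*p*S*P^4 - s^5*p*S^2*P^3 - s^5*p^2*P^3 - 3*s^5*p^2*P^4 - 2*s^5*p^2*P^5 - 2*s^5*p^2*S*P^3 - 3*s^5*p^2*S*P^4 - s^5*p^2*S^2*P^3) * h2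
  have hEeq : p * (p + s + 1) = (x ^ 2 + x) * (y ^ 2 + y) := by
    rw [hs_def, hp_def]; ring
  have hEpeq : P * (P + S + 1) = (z ^ 2 + z) * (w ^ 2 + w) := by
    rw [hS_def, hP_def]; ring
  have hEEp : (p*(p+s+1))^2 * (P*(P+S+1))^2 ≠ 0 := by
    rw [hEeq, hEpeq]
    exact mul_ne_zero (pow_ne_zero 2 (mul_ne_zero ht hty)) (pow_ne_zero 2 (mul_ne_zero htz htw))
  have crel : (p*P + (p+s+1)*(P+S+1)) * (b + b1 + b2 + b3) = 1 + b * b1 * b2 * b3 :=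
    mul_right_cancel₀ hEEp crelM
  have srel : s ^ 2 * (b + b1 + b2 + b3) = (b + b2) * (1 + b1 * b3) :=
    mul_right_cancel₀ hEEp srelM
  have hCC : (x*z*y*w + (x+1)*(z+1)*(y+1)*(w+1)) = (p*P + (p+s+1)*(P+S+1)) := by rw [hs_def, hp_def, hS_def, hP_def]; ring
  rw [hCC, ← hs_def] at trelX
  exact ⟨(p*P + (p+s+1)*(P+S+1)), s ^ 2, crel, srel, trelX⟩

lemma main_stmt18 {F : Type*} [Field F] [Fintype F] (n q d : ℕ) (hn : 0 < n)
    (hq : q = 2 ^ n) (hd : d = q ^ 3 + q ^ 2 + q - 1) (hF : Fintype.card F = q ^ 4)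
    [CharP F 2] (b x1 x2 : F) (hb : b ^ (q ^ 2) ≠ b)
    (hs1 : (x1 + 1) ^ d + x1 ^ d = b) (hs2 : (x2 + 1) ^ d + x2 ^ d = b) :
    x2 = x1 ∨ x2 = x1 + 1 := by
  haveI : Fact (Nat.Prime 2) := ⟨Nat.prime_two⟩
  have h2 : (2 : F) = 0 := by exact_mod_cast CharP.cast_eq_zero F 2
  have hq0 : q ≠ 0 := by rw [hq]; positivity
  have fr : ∀ a c : F, (a + c) ^ q = a ^ q + c ^ q := by
    intro a c; rw [hq]; exact add_pow_char_pow a c 2 n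
  have injq : ∀ a c : F, a ^ q = c ^ q → a = c := by
    intro a c h
    have h0 : (a + c) ^ q = 0 := by rw [fr, h]; linear_combination (c ^ q) * h2
    have h1 := (pow_eq_zero_iff hq0).mp h0
    linear_combination h1 - c * h2
  have hβ : b + b ^ (q ^ 2) ≠ 0 := by
    intro h; apply hb; linear_combination h - b * h2
  obtain ⟨c1, W1, K11, K21, K31⟩ := key_stmt18 n q d hn hq hd hF b x1 hb hs1
  obtain ⟨c2, W2, K12, K22, K32⟩ := key_stmt18 n q d hn hq hd hF b x2 hb hs2
  by_cases hT : b + b ^ q + b ^ (q ^ 2) + b ^ (q ^ 3) = 0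
  · exfalso
    have hg0 : (b + b ^ (q ^ 2)) * (1 + b ^ q * b ^ (q ^ 3)) = 0 := by
      rw [← K21, hT, mul_zero]
    have hg : b ^ q * b ^ (q ^ 3) = 1 := by
      have h1g := (mul_eq_zero.mp hg0).resolve_left hβ
      linear_combination h1g - h2
    have hγq : (b * b ^ (q ^ 2)) ^ q = 1 ^ q := by
      rw [one_pow, mul_pow, ← pow_mul]
      have hqe : q ^ 2 * q = q ^ 3 := by ring
      rw [hqe]; exact hg
    have hγ : b * b ^ (q ^ 2) = 1 := injq _ _ hγq
    have hkey2 : (b + b ^ q) * (b * b ^ q + 1) = 0 := by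
      linear_combination (b * b ^ q) * hT + (b ^ q) * hγ + b * hg + (((b ^ q) + b - b*(b ^ q)*(b ^ (q ^ 3)) - b*(b ^ q)*(b ^ (q ^ 2)))) * h2
    have hqq : q * q = q ^ 2 := by ring
    rcases mul_eq_zero.mp hkey2 with h | h
    · have hbq : b ^ q = b := by linear_combination h - b * h2
      apply hb
      calc b ^ (q ^ 2) = (b ^ q) ^ q := by rw [← pow_mul, hqq]
        _ = b := by rw [hbq, hbq]
    · have hbb : b * b ^ q = 1 := by linear_combination h - h2
      have hbne : b ≠ 0 := by
        intro h0; apply hb; rw [h0, zero_pow (by positivity : q ^ 2 ≠ 0)]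
      have hqeq : b ^ q = b ^ (q ^ 2) := mul_left_cancel₀ hbne (hbb.trans hγ.symm)
      have hbq : b = b ^ q := injq _ _ (by rw [← pow_mul, hqq]; exact hqeq)
      apply hb; rw [← hqeq, ← hbq]
  · have hc : c1 = c2 := mul_right_cancel₀ hT (K11.trans K12.symm)
    have hW : W1 = W2 := mul_right_cancel₀ hT (K21.trans K22.symm)
    rw [hc, hW] at K31
    have ht2 : (x1 ^ 2 + x1) ^ 2 = (x2 ^ 2 + x2) ^ 2 :=
      mul_left_cancel₀ hβ (K31.trans K32.symm)
    have h0 : ((x1 ^ 2 + x1) + (x2 ^ 2 + x2)) ^ 2 = 0 := by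
      linear_combination ht2 + (((x2^2+x2)^2 + (x1^2+x1)*(x2^2+x2))) * h2
    have h0' := (pow_eq_zero_iff (by norm_num : (2:ℕ) ≠ 0)).mp h0
    have htt : x1 ^ 2 + x1 = x2 ^ 2 + x2 := by
      linear_combination h0' - (x2 ^ 2 + x2) * h2
    have hfact : (x2 + x1) * (x2 + x1 + 1) = 0 := by
      linear_combination - htt + ((x1 + x1*x2 + x1^2)) * h2
    rcases mul_eq_zero.mp hfact with h | h
    · left; linear_combination h - x1 * h2
    · right; linear_combination h - (x1 + 1) * h2

theorem stmt_18 (n : ℕ) (hn : 0 < n) (q d : ℕ) (hq : q = 2 ^ n)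
    (hd : d = q ^ 3 + q ^ 2 + q - 1)
    (F : Type*) [Field F] [Fintype F] [DecidableEq F] (hF : Fintype.card F = q ^ 4)
    (b : F) (hb : b ^ (q ^ 2) ≠ b) :
    (Finset.univ.filter fun x : F => (x + 1) ^ d + x ^ d = b).card ≤ 2 := by
  have hchar : CharP F 2 := by
    obtain ⟨m, hp, hc⟩ := FiniteField.card F (ringChar F)
    have hcards : Fintype.card F = 2 ^ (4 * n) := by rw [hF, hq, ← pow_mul, Nat.mul_comm]
    have hdvd : ringChar F ∣ 2 ^ (4 * n) := by
      rw [hcards] at hc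
      rw [hc]
      exact dvd_pow_self (ringChar F) m.ne_zero
    have h2c : ringChar F = 2 :=
      (Nat.prime_dvd_prime_iff_eq hp Nat.prime_two).mp (hp.dvd_of_dvd_pow hdvd)
    rw [← h2c]; exact ringChar.charP F
  haveI := hchar
  rcases Finset.eq_empty_or_nonempty (Finset.univ.filter fun x : F => (x + 1) ^ d + x ^ d = b)
    with he | ⟨x0, hx0⟩
  · rw [he]; simp
  · have hx0' : (x0 + 1) ^ d + x0 ^ d = b := (Finset.mem_filter.mp hx0).2
    refine le_trans (Finset.card_le_card (show _ ⊆ ({x0, x0 + 1} : Finset F)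
      from fun x1 hx1m => ?_)) ?_
    · have hx1' : (x1 + 1) ^ d + x1 ^ d = b := (Finset.mem_filter.mp hx1m).2
      have hor := main_stmt18 n q d hn hq hd hF b x0 x1 hb hx0' hx1'
      simp only [Finset.mem_insert, Finset.mem_singleton]
      exact hor
    · exact (Finset.card_insert_le _ _).trans (by simp)
end
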